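/- Let m ≥ 1, let 0 < q₁, …, q_m, p ≤ ∞ and 1 ≤ r ≤ ∞. Let T : L^{q₁}(μ₁) × ⋯ × L^{q_m}(μ_m) → L^p(ν) be an m-linear operator over σ-finite measure spaces which is positive (if fⁱ ≥ 0 μᵢ-a.e. for every i, then T(f¹,…,f^m) ≥ 0 ν-a.e.) and bounded with norm at most M, i.e., ‖T(f¹,…,f^m)‖_{L^p(ν)} ≤ M ∏_{i=1}^m ‖fⁱ‖_{L^{qᵢ}(μᵢ)} for all fⁱ. Then for all finite families {f^i_{kᵢ}}_{kᵢ=1}^{nᵢ} ⊂ L^{qᵢ}(μᵢ): ‖(∑_{k₁,…,k_m} |T(f^1_{k₁},…,f^m_{k_m})|^r)^{1/r}‖_{L^p(ν)} ≤ M · ∏_{i=1}^m ‖(∑_{kᵢ=1}^{nᵢ} |f^i_{kᵢ}|^r)^{1/r}‖_{L^{qᵢ}(μᵢ)} (with suprema over the indices replacing the ℓ^r sums when r = ∞). -/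

import Mathlib

open MeasureTheory ENNReal Function

noncomputable def lrNorm {ι : Type} [Fintype ι] (r : ℝ≥0∞) (a : ι → ℝ) : ℝ :=
  if r = ∞ then ⨆ k, |a k| else (∑ k, |a k| ^ r.toReal) ^ (1 / r.toReal)

section lr

variable {ι : Type} [Fintype ι] {r : ℝ≥0∞} {a b : ι → ℝ}

lemma lr_toReal_pos (hr : 1 ≤ r) (hrt : r ≠ ∞) : 1 ≤ r.toReal := by
  rw [← ENNReal.toReal_one]
  exact ENNReal.toReal_mono hrt hr

lemma lrNorm_nonneg (a : ι → ℝ) : 0 ≤ lrNorm r a := by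
  unfold lrNorm
  split
  · exact Real.iSup_nonneg fun k => abs_nonneg _
  · exact Real.rpow_nonneg (Finset.sum_nonneg fun k _ => Real.rpow_nonneg (abs_nonneg _) _) _

lemma lrNorm_mono (h : ∀ k, |a k| ≤ |b k|) : lrNorm r a ≤ lrNorm r b := by
  unfold lrNorm
  split
  · refine Real.iSup_le (fun k => (h k).trans ?_) (Real.iSup_nonneg fun k => abs_nonneg _)
    exact le_ciSup (f := fun k => |b k|) (Set.Finite.bddAbove (Set.finite_range _)) k
  · refine Real.rpow_le_rpow (Finset.sum_nonneg fun k _ => Real.rpow_nonneg (abs_nonneg _) _)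
      (Finset.sum_le_sum fun k _ => Real.rpow_le_rpow (abs_nonneg _) (h k) ENNReal.toReal_nonneg)
      (by positivity)

lemma lrNorm_congr (h : ∀ k, |a k| = |b k|) : lrNorm r a = lrNorm r b :=
  le_antisymm (lrNorm_mono fun k => (h k).le) (lrNorm_mono fun k => (h k).ge)

lemma abs_le_lrNorm (hr : 1 ≤ r) (k : ι) : |a k| ≤ lrNorm r a := by
  unfold lrNorm
  split
  · exact le_ciSup (f := fun k => |a k|) (Set.Finite.bddAbove (Set.finite_range _)) k
  · rename_i hrt
    have hρ : (1:ℝ) ≤ r.toReal := lr_toReal_pos hr hrt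
    have h0 : (0:ℝ) < r.toReal := lt_of_lt_of_le one_pos hρ
    have : |a k| = (|a k| ^ r.toReal) ^ (1 / r.toReal) := by
      rw [one_div, Real.rpow_rpow_inv (abs_nonneg _) (ne_of_gt h0)]
    rw [this]
    refine Real.rpow_le_rpow (Real.rpow_nonneg (abs_nonneg _) _) ?_ (by positivity)
    exact Finset.single_le_sum (fun k _ => Real.rpow_nonneg (abs_nonneg _) _) (Finset.mem_univ k)

lemma lrNorm_le_sum (hr : 1 ≤ r) : lrNorm r a ≤ ∑ k, |a k| := by
  unfold lrNorm
  split
  · exact Real.iSup_le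
      (fun k => Finset.single_le_sum (f := fun k => |a k|) (fun k _ => abs_nonneg _) (Finset.mem_univ k))
      (Finset.sum_nonneg fun k _ => abs_nonneg _)
  · rename_i hrt
    have hρ : (1:ℝ) ≤ r.toReal := lr_toReal_pos hr hrt
    have h0 : (0:ℝ) < r.toReal := lt_of_lt_of_le one_pos hρ
    set ρ := r.toReal
    set S := ∑ k, |a k| with hS
    have hS0 : 0 ≤ S := Finset.sum_nonneg fun k _ => abs_nonneg _
    have key : ∑ k, |a k| ^ ρ ≤ S ^ ρ := by
      have hterm : ∀ k, |a k| ^ ρ ≤ |a k| * S ^ (ρ - 1) := by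
        intro k
        rcases (abs_nonneg (a k)).eq_or_lt with h0k | h0k
        · rw [← h0k, Real.zero_rpow (ne_of_gt h0), zero_mul]
        · have : |a k| ^ ρ = |a k| ^ (1:ℝ) * |a k| ^ (ρ - 1) := by
            rw [← Real.rpow_add h0k]; ring_nf
          rw [this, Real.rpow_one]
          refine mul_le_mul_of_nonneg_left ?_ (abs_nonneg _)
          refine Real.rpow_le_rpow (abs_nonneg _) ?_ (by linarith)
          exact Finset.single_le_sum (f := fun k => |a k|) (fun k _ => abs_nonneg _) (Finset.mem_univ k)
      calc ∑ k, |a k| ^ ρ ≤ ∑ k, |a k| * S ^ (ρ - 1) := Finset.sum_le_sum fun k _ => hterm k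
        _ = S * S ^ (ρ - 1) := by rw [← Finset.sum_mul]
        _ ≤ S ^ ρ := by
            rcases hS0.eq_or_lt with h | h
            · simp [← h, Real.zero_rpow (ne_of_gt h0)]
            · have h1 : (1:ℝ) + (ρ - 1) = ρ := by ring
              refine le_of_eq ?_
              calc S * S ^ (ρ - 1) = S ^ (1:ℝ) * S ^ (ρ - 1) := by rw [Real.rpow_one]
                _ = S ^ ((1:ℝ) + (ρ - 1)) := (Real.rpow_add h _ _).symm
                _ = S ^ ρ := by rw [h1]
    calc (∑ k, |a k| ^ ρ) ^ (1/ρ) ≤ (S ^ ρ) ^ (1/ρ) :=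
          Real.rpow_le_rpow (Finset.sum_nonneg fun k _ => Real.rpow_nonneg (abs_nonneg _) _)
            key (by positivity)
      _ = S := by rw [one_div, Real.rpow_rpow_inv hS0 (ne_of_gt h0)]

end lr



section lr2
variable {ι κ σ τ : Type} [Fintype ι] [Fintype κ] [Fintype σ] [Fintype τ] {r : ℝ≥0∞}

lemma lrNorm_unique [Unique ι] (hr : 1 ≤ r) (a : ι → ℝ) : lrNorm r a = |a default| := by
  unfold lrNorm
  split
  · exact ciSup_unique
  · rename_i hrt
    have h0 : (0:ℝ) < r.toReal := lt_of_lt_of_le one_pos (by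
      rw [← ENNReal.toReal_one]; exact ENNReal.toReal_mono hrt hr)
    rw [Fintype.sum_unique, one_div, Real.rpow_rpow_inv (abs_nonneg _) (ne_of_gt h0)]

lemma lrNorm_comp_equiv (e : κ ≃ ι) (a : ι → ℝ) : lrNorm r (a ∘ e) = lrNorm r a := by
  unfold lrNorm
  split
  · rw [iSup, iSup]
    congr 1
    have : (fun k => |(a ∘ e) k|) = (fun i => |a i|) ∘ e := rfl
    rw [this, Set.range_comp, Equiv.range_eq_univ, Set.image_univ]
  · congr 1
    exact Equiv.sum_comp e fun i => |a i| ^ r.toReal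

lemma iSup_prod_real (F : σ × τ → ℝ) (hF : ∀ p, 0 ≤ F p) :
    ⨆ p, F p = ⨆ s, ⨆ t, F (s, t) := by
  rcases isEmpty_or_nonempty σ with hσ | hσ
  · rw [Real.iSup_of_isEmpty, Real.iSup_of_isEmpty]
  rcases isEmpty_or_nonempty τ with hτ | hτ
  · have h1 : IsEmpty (σ × τ) := by infer_instance
    rw [Real.iSup_of_isEmpty]
    simp [Real.iSup_of_isEmpty]
  apply le_antisymm
  · refine Real.iSup_le (fun p => ?_) (Real.iSup_nonneg fun s => Real.iSup_nonneg fun t => hF _)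
    calc F p ≤ ⨆ t, F (p.1, t) :=
          le_ciSup (f := fun t => F (p.1, t)) (Set.Finite.bddAbove (Set.finite_range _)) p.2
      _ ≤ ⨆ s, ⨆ t, F (s, t) :=
          le_ciSup (f := fun s => ⨆ t, F (s, t)) (Set.Finite.bddAbove (Set.finite_range _)) p.1
  · refine Real.iSup_le (fun s => Real.iSup_le (fun t => ?_) (Real.iSup_nonneg fun p => hF _))
      (Real.iSup_nonneg fun p => hF _)
    exact le_ciSup (f := fun p => F p) (Set.Finite.bddAbove (Set.finite_range _)) (s, t)

lemma lrNorm_prod (hr : 1 ≤ r) (a : σ × τ → ℝ) :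
    lrNorm r a = lrNorm r (fun s => lrNorm r (fun t => a (s, t))) := by
  have hnn : ∀ (κ' : Type) [Fintype κ'] (b : κ' → ℝ), 0 ≤ lrNorm r b := by
    intro κ' _ b
    unfold lrNorm
    split
    · exact Real.iSup_nonneg fun k => abs_nonneg _
    · exact Real.rpow_nonneg (Finset.sum_nonneg fun k _ => Real.rpow_nonneg (abs_nonneg _) _) _
  unfold lrNorm
  split
  · rw [iSup_prod_real (fun p => |a p|) (fun p => abs_nonneg _)]
    congr 1; funext s
    rw [abs_of_nonneg (Real.iSup_nonneg fun t => abs_nonneg _)]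
  · rename_i hrt
    have h0 : (0:ℝ) < r.toReal := lt_of_lt_of_le one_pos (by
      rw [← ENNReal.toReal_one]; exact ENNReal.toReal_mono hrt hr)
    congr 1
    rw [Fintype.sum_prod_type]
    refine Finset.sum_congr rfl fun s _ => ?_
    rw [abs_of_nonneg (Real.rpow_nonneg
      (Finset.sum_nonneg fun t _ => Real.rpow_nonneg (abs_nonneg _) _) _)]
    rw [one_div, Real.rpow_inv_rpow
      (Finset.sum_nonneg fun t _ => Real.rpow_nonneg (abs_nonneg _) _) (ne_of_gt h0)]

lemma lrNorm_measurable {α : Type*} [MeasurableSpace α] (r : ℝ≥0∞) (b : ι → α → ℝ)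
    (hb : ∀ k, Measurable (b k)) :
    Measurable (fun x => lrNorm r (fun k => b k x)) := by
  unfold lrNorm
  split
  · exact Measurable.iSup fun k => (hb k).abs
  · exact (Real.continuous_rpow_const (by positivity)).measurable.comp
      (Finset.measurable_sum _ fun k _ =>
        (Real.continuous_rpow_const ENNReal.toReal_nonneg).measurable.comp (hb k).abs)

end lr2




section lr3
variable {ι : Type} [Fintype ι] {r : ℝ≥0∞}

lemma lrNorm_of_nonneg (hrt : r ≠ ∞) (b : ι → ℝ) (hb : ∀ k, 0 ≤ b k) :
    lrNorm r b = (∑ k, b k ^ r.toReal) ^ (1 / r.toReal) := by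
  unfold lrNorm
  rw [if_neg hrt]
  congr 1
  exact Finset.sum_congr rfl fun k _ => by rw [abs_of_nonneg (hb k)]

lemma exists_dual_real (hr : 1 ≤ r) (b : ι → ℝ) (hb : ∀ k, 0 ≤ b k) :
    ∃ c : ι → ℝ, (∀ k, 0 ≤ c k) ∧
      (∀ b' : ι → ℝ, (∀ k, 0 ≤ b' k) → ∑ k, c k * b' k ≤ lrNorm r b') ∧
      lrNorm r b ≤ ∑ k, c k * b k := by
  classical
  by_cases hrt : r = ∞
  · subst hrt
    rcases isEmpty_or_nonempty ι with hι | hι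
    · refine ⟨fun _ => 0, fun k => le_refl _, fun b' _ => ?_, ?_⟩
      · simpa using lrNorm_nonneg b'
      · unfold lrNorm
        rw [if_pos rfl, Real.iSup_of_isEmpty]
        simp
    · obtain ⟨k₀, hk₀⟩ := Finite.exists_max b
      refine ⟨fun k => if k = k₀ then 1 else 0, fun k => by positivity, fun b' hb' => ?_, ?_⟩
      · have : ∑ k, (if k = k₀ then (1:ℝ) else 0) * b' k = b' k₀ := by
          rw [Finset.sum_eq_single k₀] <;> simp (config := { contextual := true })
        rw [this]
        calc b' k₀ ≤ |b' k₀| := le_abs_self _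
          _ ≤ lrNorm ∞ b' := by
              unfold lrNorm
              rw [if_pos rfl]
              exact le_ciSup (f := fun k => |b' k|) (Set.Finite.bddAbove (Set.finite_range _)) k₀
      · have : ∑ k, (if k = k₀ then (1:ℝ) else 0) * b k = b k₀ := by
          rw [Finset.sum_eq_single k₀] <;> simp (config := { contextual := true })
        rw [this]
        unfold lrNorm
        rw [if_pos rfl]
        refine Real.iSup_le (fun k => ?_) (hb k₀)
        rw [abs_of_nonneg (hb k)]
        exact hk₀ k
  · have hρ : (1:ℝ) ≤ r.toReal := by
      rw [← ENNReal.toReal_one]; exact ENNReal.toReal_mono hrt hr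
    have h0 : (0:ℝ) < r.toReal := lt_of_lt_of_le one_pos hρ
    set ρ := r.toReal with hρdef
    set S := lrNorm r b with hSdef
    have hS0 : 0 ≤ S := lrNorm_nonneg b
    rcases hS0.eq_or_lt with hS | hS
    · refine ⟨fun _ => 0, fun k => le_refl _, fun b' hb' => ?_, ?_⟩
      · simpa using lrNorm_nonneg b'
      · rw [← hS]; simp
    · refine ⟨fun k => (b k / S) ^ (ρ - 1),
        fun k => Real.rpow_nonneg (div_nonneg (hb k) hS0) _, ?_, ?_⟩
      · -- dual property
        intro b' hb'
        rcases hρ.eq_or_lt with hρ1 | hρ1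
        · -- ρ = 1
          have : ∀ k, (b k / S) ^ (ρ - 1) = 1 := by
            intro k; rw [← hρ1]; norm_num
          simp only [this, one_mul]
          rw [lrNorm_of_nonneg hrt b' hb', ← hρdef, ← hρ1]
          norm_num
        · -- ρ > 1
          have hpq : ρ.HolderConjugate (ρ / (ρ - 1)) := Real.HolderConjugate.conjExponent hρ1
          have H := Real.inner_le_Lp_mul_Lq_of_nonneg (Finset.univ) hpq.symm
            (f := fun k => (b k / S) ^ (ρ - 1)) (g := b')
            (fun k _ => Real.rpow_nonneg (div_nonneg (hb k) hS0) _) (fun k _ => hb' k)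
          have hcpow : ∀ k, ((b k / S) ^ (ρ - 1)) ^ (ρ / (ρ - 1)) = (b k / S) ^ ρ := by
            intro k
            rw [← Real.rpow_mul (div_nonneg (hb k) hS0)]
            congr 1
            rw [mul_div_assoc', mul_comm, mul_div_assoc]
            rw [div_self (ne_of_gt (by linarith : (0:ℝ) < ρ - 1)), mul_one]
          have hSpow : S ^ ρ = ∑ k, b k ^ ρ := by
            rw [hSdef, lrNorm_of_nonneg hrt b hb, one_div,
              Real.rpow_inv_rpow (Finset.sum_nonneg fun k _ => Real.rpow_nonneg (hb k) _)
                (ne_of_gt h0)]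
          have hsum1 : ∑ k, ((b k / S) ^ (ρ - 1)) ^ (ρ / (ρ - 1)) = 1 := by
            simp only [hcpow]
            have : ∀ k, (b k / S) ^ ρ = b k ^ ρ / S ^ ρ := fun k =>
              Real.div_rpow (hb k) hS0 _
            simp only [this]
            rw [← Finset.sum_div, ← hSpow, div_self (by positivity)]
          rw [hsum1, Real.one_rpow, one_mul] at H
          rw [lrNorm_of_nonneg hrt b' hb', ← hρdef]
          exact H
      · -- value
        have hSpow : S ^ ρ = ∑ k, b k ^ ρ := by
          rw [hSdef, lrNorm_of_nonneg hrt b hb, one_div,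
            Real.rpow_inv_rpow (Finset.sum_nonneg fun k _ => Real.rpow_nonneg (hb k) _)
              (ne_of_gt h0)]
        have hterm : ∀ k, (b k / S) ^ (ρ - 1) * b k = b k ^ ρ / S ^ (ρ - 1) := by
          intro k
          rcases (hb k).eq_or_lt with hbk | hbk
          · rw [← hbk, mul_zero, Real.zero_rpow (ne_of_gt h0), zero_div]
          · rw [Real.div_rpow (hb k) hS0, div_mul_eq_mul_div]
            congr 1
            calc b k ^ (ρ - 1) * b k = b k ^ (ρ - 1) * b k ^ (1:ℝ) := by rw [Real.rpow_one]
              _ = b k ^ (ρ - 1 + 1) := (Real.rpow_add hbk _ _).symm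
              _ = b k ^ ρ := by ring_nf
        calc S = S ^ ρ / S ^ (ρ - 1) := by
              rw [← Real.rpow_sub hS]
              ring_nf
              rw [Real.rpow_one]
          _ = (∑ k, b k ^ ρ) / S ^ (ρ - 1) := by rw [hSpow]
          _ = ∑ k, b k ^ ρ / S ^ (ρ - 1) := by rw [Finset.sum_div]
          _ = ∑ k, (b k / S) ^ (ρ - 1) * b k := by
              exact (Finset.sum_congr rfl fun k _ => (hterm k)).symm
          _ ≤ ∑ k, (b k / S) ^ (ρ - 1) * b k := le_refl _

lemma exists_dual_rat (hr : 1 ≤ r) (b : ι → ℝ) (hb : ∀ k, 0 ≤ b k) {ε : ℝ} (hε : 0 < ε) :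
    ∃ c : ι → ℝ, (∀ k, ∃ v : ℚ, c k = (v : ℝ)) ∧ (∀ k, 0 ≤ c k) ∧
      (∀ b' : ι → ℝ, (∀ k, 0 ≤ b' k) → ∑ k, c k * b' k ≤ lrNorm r b') ∧
      lrNorm r b ≤ ∑ k, c k * b k + ε := by
  obtain ⟨c, hc0, hcdual, hcval⟩ := exists_dual_real hr b hb
  set B := ∑ k, b k with hBdef
  have hB0 : 0 ≤ B := Finset.sum_nonneg fun k _ => hb k
  set δ := ε / (B + 1) with hδdef
  have hδ0 : 0 < δ := by positivity
  have hex : ∀ k, ∃ v : ℚ, c k - δ < (v:ℝ) ∧ (v:ℝ) < c k :=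
    fun k => exists_rat_btwn (by linarith)
  choose v hv1 hv2 using hex
  refine ⟨fun k => max ((v k : ℝ)) 0, fun k => ⟨max (v k) 0, by push_cast; rfl⟩,
    fun k => le_max_right _ _, fun b' hb' => ?_, ?_⟩
  · calc ∑ k, max ((v k:ℝ)) 0 * b' k ≤ ∑ k, c k * b' k :=
        Finset.sum_le_sum fun k _ =>
          mul_le_mul_of_nonneg_right (max_le (hv2 k).le (hc0 k)) (hb' k)
      _ ≤ lrNorm r b' := hcdual b' hb'
  · have hkey : ∑ k, c k * b k ≤ ∑ k, max ((v k:ℝ)) 0 * b k + δ * B := by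
      have : ∀ k, c k * b k ≤ max ((v k:ℝ)) 0 * b k + δ * b k := by
        intro k
        have h1 : c k ≤ max ((v k:ℝ)) 0 + δ := by
          have := hv1 k
          have := le_max_left ((v k:ℝ)) 0
          linarith
        calc c k * b k ≤ (max ((v k:ℝ)) 0 + δ) * b k :=
              mul_le_mul_of_nonneg_right h1 (hb k)
          _ = max ((v k:ℝ)) 0 * b k + δ * b k := by ring
      calc ∑ k, c k * b k ≤ ∑ k, (max ((v k:ℝ)) 0 * b k + δ * b k) :=
            Finset.sum_le_sum fun k _ => this k
        _ = ∑ k, max ((v k:ℝ)) 0 * b k + δ * B := by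
            rw [Finset.sum_add_distrib, ← Finset.mul_sum]
    have hδB : δ * B ≤ ε := by
      rw [hδdef]
      rw [div_mul_eq_mul_div, div_le_iff₀ (by positivity)]
      nlinarith
    linarith [hcval, hkey]

end lr3

/-- A map `T` on (representatives of) functions which is, in the almost-everywhere sense,
an `m`-linear operator `L^{q₁}(μ₁) × ⋯ × L^{q_m}(μ_m) → L^p(ν)` bounded with norm at most `M`. -/
structure IsBddMultilinear {m : ℕ} {Ω : Fin m → Type} [∀ i, MeasurableSpace (Ω i)]
    (μ : ∀ i, Measure (Ω i)) {Ω' : Type} [MeasurableSpace Ω'] (ν : Measure Ω')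
    (q : Fin m → ℝ≥0∞) (p : ℝ≥0∞)
    (T : (∀ i, Ω i → ℝ) → Ω' → ℝ) (M : ℝ) : Prop where
  congr : ∀ f g : ∀ i, Ω i → ℝ, (∀ j, MemLp (f j) (q j) (μ j)) →
      (∀ j, MemLp (g j) (q j) (μ j)) → (∀ j, f j =ᵐ[μ j] g j) → T f =ᵐ[ν] T g
  multilinear : ∀ (f : ∀ i, Ω i → ℝ), (∀ j, MemLp (f j) (q j) (μ j)) →
      ∀ (i : Fin m) (c : ℝ) (g h : Ω i → ℝ), MemLp g (q i) (μ i) → MemLp h (q i) (μ i) →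
        T (update f i fun x => c * g x + h x) =ᵐ[ν]
          fun ω => c * T (update f i g) ω + T (update f i h) ω
  memℒp : ∀ f : ∀ i, Ω i → ℝ, (∀ j, MemLp (f j) (q j) (μ j)) → MemLp (T f) p ν
  bound : ∀ f : ∀ i, Ω i → ℝ, (∀ j, MemLp (f j) (q j) (μ j)) →
      eLpNorm (T f) p ν ≤ ENNReal.ofReal M * ∏ i, eLpNorm (f i) (q i) (μ i)

/-- The Marcinkiewicz–Zygmund inequality at exponent `r` with constant `K` for the operator `T`
and the finite families `f i (kᵢ)`, `kᵢ = 1, …, n i`. -/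
noncomputable def MZineq {m : ℕ} {Ω : Fin m → Type} [∀ i, MeasurableSpace (Ω i)]
    (μ : ∀ i, Measure (Ω i)) {Ω' : Type} [MeasurableSpace Ω'] (ν : Measure Ω')
    (q : Fin m → ℝ≥0∞) (p r : ℝ≥0∞)
    (T : (∀ i, Ω i → ℝ) → Ω' → ℝ) (K : ℝ)
    (n : Fin m → ℕ) (f : ∀ i, Fin (n i) → Ω i → ℝ) : Prop :=
  eLpNorm (fun ω => lrNorm r fun k : ∀ i, Fin (n i) => T (fun i => f i (k i)) ω) p ν
    ≤ ENNReal.ofReal K *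
      ∏ i, eLpNorm (fun x => lrNorm r fun kᵢ : Fin (n i) => f i kᵢ x) (q i) (μ i)

/-- The triple `(q, p, r)` satisfies the (m-linear) Marcinkiewicz–Zygmund inequality
with constant `C`: for all σ-finite measure spaces, every bounded multilinear operator with
norm at most `M`, and all finite families in each slot, the MZ inequality holds with `C * M`. -/
def MZprop (m : ℕ) (q : Fin m → ℝ≥0∞) (p r : ℝ≥0∞) (C : ℝ) : Prop :=
  ∀ (Ω : Fin m → Type) [∀ i, MeasurableSpace (Ω i)] (μ : ∀ i, Measure (Ω i))
    [∀ i, SigmaFinite (μ i)]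
    (Ω' : Type) [MeasurableSpace Ω'] (ν : Measure Ω') [SigmaFinite ν]
    (T : (∀ i, Ω i → ℝ) → Ω' → ℝ) (M : ℝ), 0 ≤ M →
    IsBddMultilinear μ ν q p T M →
    ∀ (n : Fin m → ℕ) (f : ∀ i, Fin (n i) → Ω i → ℝ),
      (∀ i kᵢ, MemLp (f i kᵢ) (q i) (μ i)) →
      MZineq μ ν q p r T (C * M) n f

section Tlemmas

variable {m : ℕ} {Ω : Fin m → Type} [∀ i, MeasurableSpace (Ω i)] {μ : ∀ i, Measure (Ω i)}
  {Ω' : Type} [MeasurableSpace Ω'] {ν : Measure Ω'} {q : Fin m → ℝ≥0∞} {p : ℝ≥0∞}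
  {T : (∀ i, Ω i → ℝ) → Ω' → ℝ} {M : ℝ}

lemma memℒp_sum_mul {i : Fin m} {N : ℕ} (c : Fin N → ℝ) (a : Fin N → Ω i → ℝ)
    (ha : ∀ k, MemLp (a k) (q i) (μ i)) (s : Finset (Fin N)) :
    MemLp (fun x => ∑ k ∈ s, c k * a k x) (q i) (μ i) := by
  have h := memLp_finset_sum' (μ := μ i) (p := q i) s
    (f := fun k => fun x => c k * a k x) (fun k _ => (ha k).const_mul (c k))
  refine h.ae_eq (Filter.Eventually.of_forall fun x => ?_)
  simp [Finset.sum_apply]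

lemma memℒp_update {f : ∀ j, Ω j → ℝ} (hf : ∀ j, MemLp (f j) (q j) (μ j)) {i : Fin m}
    {h : Ω i → ℝ} (hh : MemLp h (q i) (μ i)) :
    ∀ j, MemLp ((update f i h) j) (q j) (μ j) := by
  intro j
  rcases eq_or_ne j i with rfl | hji
  · rw [update_self]; exact hh
  · rw [update_of_ne hji]; exact hf j

lemma T_zero_slot (hT : IsBddMultilinear μ ν q p T M) (F : ∀ j, Ω j → ℝ)
    (hF : ∀ j, MemLp (F j) (q j) (μ j)) (i : Fin m) :
    T (update F i (fun _ => 0)) =ᵐ[ν] fun _ => 0 := by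
  have h := hT.multilinear (update F i (fun _ => (0:ℝ))) (memℒp_update hF MemLp.zero) i 1
    (fun _ => 0) (fun _ => 0) MemLp.zero MemLp.zero
  simp only [Function.update_idem, one_mul, mul_zero, add_zero] at h
  filter_upwards [h] with ω hω
  show _ = (0:ℝ)
  linarith [hω]

lemma T_sum_slot (hT : IsBddMultilinear μ ν q p T M) (F : ∀ j, Ω j → ℝ)
    (hF : ∀ j, MemLp (F j) (q j) (μ j)) (i : Fin m) {N : ℕ} (c : Fin N → ℝ)
    (a : Fin N → Ω i → ℝ) (ha : ∀ k, MemLp (a k) (q i) (μ i)) (s : Finset (Fin N)) :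
    T (update F i (fun x => ∑ k ∈ s, c k * a k x)) =ᵐ[ν]
      fun ω => ∑ k ∈ s, c k * T (update F i (a k)) ω := by
  classical
  induction s using Finset.induction_on with
  | empty =>
      simp only [Finset.sum_empty]
      exact T_zero_slot hT F hF i
  | @insert k s hk ih =>
      have harg : (fun x => ∑ k' ∈ insert k s, c k' * a k' x)
          = (fun x => c k * a k x + ∑ k' ∈ s, c k' * a k' x) := by
        funext x; rw [Finset.sum_insert hk]
      rw [harg]
      have h := hT.multilinear (update F i (fun _ => (0:ℝ))) (memℒp_update hF MemLp.zero) i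
        (c k) (a k) (fun x => ∑ k' ∈ s, c k' * a k' x) (ha k) (memℒp_sum_mul c a ha s)
      simp only [Function.update_idem] at h
      filter_upwards [h, ih] with ω h1 h2
      rw [h1, h2, Finset.sum_insert hk]

lemma T_abs_le (hT : IsBddMultilinear μ ν q p T M)
    (hpos : ∀ f : ∀ i, Ω i → ℝ, (∀ j, MemLp (f j) (q j) (μ j)) →
      (∀ j, ∀ᵐ x ∂(μ j), 0 ≤ f j x) → ∀ᵐ ω ∂ν, 0 ≤ T f ω)
    (f g : ∀ j, Ω j → ℝ) (hf : ∀ j, MemLp (f j) (q j) (μ j))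
    (hg : ∀ j, MemLp (g j) (q j) (μ j))
    (habs : ∀ j, ∀ᵐ x ∂(μ j), |f j x| ≤ g j x) :
    ∀ᵐ ω ∂ν, |T f ω| ≤ T g ω := by
  classical
  suffices key : ∀ s : Finset (Fin m), ∀ f g : ∀ j, Ω j → ℝ,
      (∀ j, MemLp (f j) (q j) (μ j)) → (∀ j, MemLp (g j) (q j) (μ j)) →
      (∀ j, ∀ᵐ x ∂(μ j), |f j x| ≤ g j x) →
      (∀ j, j ∉ s → f j =ᵐ[μ j] g j ∧ (∀ᵐ x ∂(μ j), 0 ≤ f j x)) →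
      ∀ᵐ ω ∂ν, |T f ω| ≤ T g ω by
    exact key Finset.univ f g hf hg habs (fun j hj => absurd (Finset.mem_univ j) hj)
  intro s
  induction s using Finset.induction_on with
  | empty =>
      intro f g hf hg habs hout
      have h1 : T f =ᵐ[ν] T g := hT.congr f g hf hg fun j => (hout j (by simp)).1
      have h2 : ∀ᵐ ω ∂ν, 0 ≤ T f ω := hpos f hf fun j => (hout j (by simp)).2
      filter_upwards [h1, h2] with ω hω1 hω2
      rw [abs_of_nonneg hω2, hω1]
  | @insert i₀ s hi₀ ih =>
      intro f g hf hg habs hout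
      set fp : Ω i₀ → ℝ := fun x => max (f i₀ x) 0 with hfp
      set fn : Ω i₀ → ℝ := fun x => max (-(f i₀ x)) 0 with hfn
      have hfpm : MemLp fp (q i₀) (μ i₀) := by
        refine MemLp.of_le (hf i₀).abs ?_ (Filter.Eventually.of_forall fun x => ?_)
        · exact (hf i₀).aestronglyMeasurable.sup aestronglyMeasurable_const
        · simp only [Real.norm_eq_abs, Pi.abs_apply, abs_abs, hfp]
          rw [abs_of_nonneg (le_max_right _ _)]
          exact max_le (le_abs_self _) (abs_nonneg _)
      have hfnm : MemLp fn (q i₀) (μ i₀) := by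
        refine MemLp.of_le (hf i₀).abs ?_ (Filter.Eventually.of_forall fun x => ?_)
        · exact (hf i₀).neg.aestronglyMeasurable.sup aestronglyMeasurable_const
        · simp only [Real.norm_eq_abs, Pi.abs_apply, abs_abs, hfn]
          rw [abs_of_nonneg (le_max_right _ _)]
          exact max_le (neg_le_abs _) (abs_nonneg _)
      -- decomposition of T f
      have hdec : T f =ᵐ[ν] fun ω =>
          (-1 : ℝ) * T (update f i₀ fn) ω + T (update f i₀ fp) ω := by
        have h := hT.multilinear f hf i₀ (-1) fn fp hfnm hfpm
        have harg : (fun x => (-1:ℝ) * fn x + fp x) = f i₀ := by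
          funext x
          simp only [hfn, hfp]
          rcases le_total (f i₀ x) 0 with h' | h'
          · rw [max_eq_left (by linarith), max_eq_right h']; ring
          · rw [max_eq_right (by linarith), max_eq_left h']; ring
        rw [harg, Function.update_eq_self] at h
        exact h
      -- IH for fp and fn
      have hIHp := ih (update f i₀ fp) (update g i₀ fp)
        (memℒp_update hf hfpm) (memℒp_update hg hfpm)
        (by
          intro j
          rcases eq_or_ne j i₀ with rfl | hji
          · simp only [update_self]
            exact Filter.Eventually.of_forall fun x =>
              le_of_eq (abs_of_nonneg (le_max_right _ _))
          · simp only [update_of_ne hji]; exact habs j)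
        (by
          intro j hj
          rcases eq_or_ne j i₀ with rfl | hji
          · simp only [update_self]
            exact ⟨Filter.EventuallyEq.rfl, Filter.Eventually.of_forall fun x => le_max_right _ _⟩
          · simp only [update_of_ne hji]
            exact hout j (by simp [hji, hj]))
      have hIHn := ih (update f i₀ fn) (update g i₀ fn)
        (memℒp_update hf hfnm) (memℒp_update hg hfnm)
        (by
          intro j
          rcases eq_or_ne j i₀ with rfl | hji
          · simp only [update_self]
            exact Filter.Eventually.of_forall fun x =>
              le_of_eq (abs_of_nonneg (le_max_right _ _))
          · simp only [update_of_ne hji]; exact habs j)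
        (by
          intro j hj
          rcases eq_or_ne j i₀ with rfl | hji
          · simp only [update_self]
            exact ⟨Filter.EventuallyEq.rfl, Filter.Eventually.of_forall fun x => le_max_right _ _⟩
          · simp only [update_of_ne hji]
            exact hout j (by simp [hji, hj]))
      -- sum of the two dominators
      have habsf : MemLp (fun x => |f i₀ x|) (q i₀) (μ i₀) := (hf i₀).abs
      have hsum2 : T (update g i₀ (fun x => |f i₀ x|)) =ᵐ[ν]
          fun ω => (1:ℝ) * T (update g i₀ fp) ω + T (update g i₀ fn) ω := by
        have h := hT.multilinear g hg i₀ 1 fp fn hfpm hfnm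
        have harg : (fun x => (1:ℝ) * fp x + fn x) = fun x => |f i₀ x| := by
          funext x
          simp only [hfp, hfn]
          rcases le_total (f i₀ x) 0 with h' | h'
          · rw [max_eq_right h', max_eq_left (by linarith), abs_of_nonpos h']; ring
          · rw [max_eq_left h', max_eq_right (by linarith), abs_of_nonneg h']; ring
        rw [harg] at h
        exact h
      -- monotone step
      have hmono : ∀ᵐ ω ∂ν, T (update g i₀ (fun x => |f i₀ x|)) ω ≤ T g ω := by
        have hgmf : MemLp (fun x => g i₀ x - |f i₀ x|) (q i₀) (μ i₀) := by
          have := (hg i₀).sub habsf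
          refine this.ae_eq (Filter.Eventually.of_forall fun x => ?_)
          simp [Pi.sub_apply]
        have h := hT.multilinear g hg i₀ 1 (fun x => g i₀ x - |f i₀ x|)
          (fun x => |f i₀ x|) hgmf habsf
        have harg : (fun x => (1:ℝ) * (g i₀ x - |f i₀ x|) + |f i₀ x|) = g i₀ := by
          funext x; ring
        rw [harg, Function.update_eq_self] at h
        have hposd : ∀ᵐ ω ∂ν, 0 ≤ T (update g i₀ (fun x => g i₀ x - |f i₀ x|)) ω := by
          refine hpos _ (memℒp_update hg hgmf) ?_
          intro j
          rcases eq_or_ne j i₀ with rfl | hji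
          · simp only [update_self]
            filter_upwards [habs j] with x hx
            linarith
          · simp only [update_of_ne hji]
            filter_upwards [habs j] with x hx
            exact le_trans (abs_nonneg _) hx
        filter_upwards [h, hposd] with ω h1 h2
        rw [h1]
        linarith
      filter_upwards [hdec, hIHp, hIHn, hsum2, hmono] with ω h1 h2 h3 h4 h5
      rw [h1]
      have := abs_add_le ((-1:ℝ) * T (update f i₀ fn) ω) (T (update f i₀ fp) ω)
      rw [abs_mul, abs_neg, abs_one, one_mul] at this
      rw [h4] at h5
      linarith [abs_nonneg (T (update f i₀ fn) ω)]

end Tlemmas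
section Tlemmas2

variable {m : ℕ} {Ω : Fin m → Type} [∀ i, MeasurableSpace (Ω i)] {μ : ∀ i, Measure (Ω i)}
  {Ω' : Type} [MeasurableSpace Ω'] {ν : Measure Ω'} {q : Fin m → ℝ≥0∞} {p : ℝ≥0∞}
  {T : (∀ i, Ω i → ℝ) → Ω' → ℝ} {M : ℝ}

lemma memℒp_lrNorm {r : ℝ≥0∞} (hr : 1 ≤ r) {α : Type} [MeasurableSpace α] {μ' : Measure α}
    {q' : ℝ≥0∞} {N : ℕ} (a : Fin N → α → ℝ) (ha : ∀ k, MemLp (a k) q' μ') :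
    MemLp (fun x => lrNorm r (fun k => a k x)) q' μ' := by
  set a' : Fin N → α → ℝ := fun k => (ha k).aestronglyMeasurable.mk (a k) with ha'def
  have hG'meas : Measurable (fun x => lrNorm r (fun k => a' k x)) :=
    lrNorm_measurable r a' fun k => (ha k).aestronglyMeasurable.stronglyMeasurable_mk.measurable
  have heq : (fun x => lrNorm r (fun k => a' k x)) =ᵐ[μ'] fun x => lrNorm r (fun k => a k x) := by
    have h : ∀ᵐ x ∂μ', ∀ k, a k x = a' k x :=
      ae_all_iff.mpr fun k => (ha k).aestronglyMeasurable.ae_eq_mk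
    filter_upwards [h] with x hx
    exact lrNorm_congr fun k => by rw [hx k]
  have hGsm : AEStronglyMeasurable (fun x => lrNorm r (fun k => a k x)) μ' :=
    hG'meas.aestronglyMeasurable.congr heq
  have hsum : MemLp (fun x => ∑ k, |a k x|) q' μ' := by
    have h := memLp_finset_sum' (μ := μ') (p := q') Finset.univ
      (f := fun k => fun x => |a k x|) (fun k _ => (ha k).abs)
    refine h.ae_eq (Filter.Eventually.of_forall fun x => ?_)
    simp [Finset.sum_apply]
  refine MemLp.of_le hsum hGsm (Filter.Eventually.of_forall fun x => ?_)
  rw [Real.norm_eq_abs, Real.norm_eq_abs, abs_of_nonneg (lrNorm_nonneg _),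
    abs_of_nonneg (Finset.sum_nonneg fun k _ => abs_nonneg _)]
  exact lrNorm_le_sum hr

lemma T_lr_slot {r : ℝ≥0∞} (hr : 1 ≤ r) (hT : IsBddMultilinear μ ν q p T M)
    (hpos : ∀ f : ∀ i, Ω i → ℝ, (∀ j, MemLp (f j) (q j) (μ j)) →
      (∀ j, ∀ᵐ x ∂(μ j), 0 ≤ f j x) → ∀ᵐ ω ∂ν, 0 ≤ T f ω)
    (F : ∀ j, Ω j → ℝ) (hF : ∀ j, MemLp (F j) (q j) (μ j))
    (hFpos : ∀ j, ∀ᵐ x ∂(μ j), 0 ≤ F j x)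
    (i : Fin m) {N : ℕ} (a : Fin N → Ω i → ℝ) (ha : ∀ k, MemLp (a k) (q i) (μ i))
    (hapos : ∀ k, ∀ᵐ x ∂(μ i), 0 ≤ a k x) :
    ∀ᵐ ω ∂ν, lrNorm r (fun k => T (update F i (a k)) ω)
      ≤ T (update F i (fun x => lrNorm r (fun k => a k x))) ω := by
  classical
  set G : Ω i → ℝ := fun x => lrNorm r (fun k => a k x) with hGdef
  have hG : MemLp G (q i) (μ i) := memℒp_lrNorm hr a ha
  have hae : ∀ (d : {v : Fin N → ℚ // (∀ k, (0:ℝ) ≤ (v k : ℝ)) ∧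
        ∀ b' : Fin N → ℝ, (∀ k, 0 ≤ b' k) → ∑ k, (v k : ℝ) * b' k ≤ lrNorm r b'}),
      ∀ᵐ ω ∂ν, ∑ k, ((d.1 k : ℝ)) * T (update F i (a k)) ω ≤ T (update F i G) ω := by
    rintro ⟨v, hv0, hvd⟩
    set c : Fin N → ℝ := fun k => (v k : ℝ) with hcdef
    have h1 := T_sum_slot hT F hF i c a ha Finset.univ
    have h2 : ∀ᵐ ω ∂ν, |T (update F i (fun x => ∑ k, c k * a k x)) ω|
        ≤ T (update F i G) ω := by
      refine T_abs_le hT hpos _ _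
        (memℒp_update hF (memℒp_sum_mul c a ha Finset.univ)) (memℒp_update hF hG) ?_
      intro j
      rcases eq_or_ne j i with rfl | hji
      · simp only [update_self]
        have h : ∀ᵐ x ∂(μ j), ∀ k, 0 ≤ a k x := ae_all_iff.mpr hapos
        filter_upwards [h] with x hx
        rw [abs_of_nonneg (Finset.sum_nonneg fun k _ => mul_nonneg (hv0 k) (hx k))]
        exact hvd (fun k => a k x) hx
      · simp only [update_of_ne hji]
        filter_upwards [hFpos j] with x hx
        rw [abs_of_nonneg hx]
    filter_upwards [h1, h2] with ω h1ω h2ω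
    calc ∑ k, c k * T (update F i (a k)) ω
        = T (update F i (fun x => ∑ k, c k * a k x)) ω := h1ω.symm
      _ ≤ |T (update F i (fun x => ∑ k, c k * a k x)) ω| := le_abs_self _
      _ ≤ T (update F i G) ω := h2ω
  have haepos : ∀ᵐ ω ∂ν, ∀ k, 0 ≤ T (update F i (a k)) ω := by
    refine ae_all_iff.mpr fun k => hpos _ (memℒp_update hF (ha k)) ?_
    intro j
    rcases eq_or_ne j i with rfl | hji
    · simpa only [update_self] using hapos k
    · simpa only [update_of_ne hji] using hFpos j
  have hall := ae_all_iff.mpr hae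
  filter_upwards [hall, haepos] with ω hω hωpos
  set b : Fin N → ℝ := fun k => T (update F i (a k)) ω with hbdef
  by_contra hcon
  push_neg at hcon
  obtain ⟨c, hcr, hc0, hcd, hcv⟩ := exists_dual_rat hr b hωpos
    (ε := (lrNorm r b - T (update F i G) ω) / 2) (by linarith)
  choose v hv using hcr
  have hd1 : ∀ k, (0:ℝ) ≤ ((v k : ℚ) : ℝ) := fun k => (hv k) ▸ hc0 k
  have hd2 : ∀ b' : Fin N → ℝ, (∀ k, 0 ≤ b' k) → ∑ k, ((v k : ℚ) : ℝ) * b' k ≤ lrNorm r b' := by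
    intro b' hb'
    have : ∑ k, ((v k : ℚ) : ℝ) * b' k = ∑ k, c k * b' k :=
      Finset.sum_congr rfl fun k _ => by rw [← hv k]
    rw [this]
    exact hcd b' hb'
  have hkey := hω ⟨v, hd1, hd2⟩
  have hveq : ∑ k, ((v k : ℚ) : ℝ) * b k = ∑ k, c k * b k :=
    Finset.sum_congr rfl fun k _ => by rw [← hv k]
  rw [hveq] at hkey
  linarith

end Tlemmas2
section MainInduction

def insertPiEquiv {m : ℕ} (n : Fin m → ℕ) (i₀ : Fin m) (S : Finset (Fin m)) (hi₀ : i₀ ∉ S) :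
    (∀ i : {j // j ∈ insert i₀ S}, Fin (n i.1)) ≃
      ((∀ i : {j // j ∈ S}, Fin (n i.1)) × Fin (n i₀)) where
  toFun k := (fun i => k ⟨i.1, Finset.mem_insert_of_mem i.2⟩, k ⟨i₀, Finset.mem_insert_self i₀ S⟩)
  invFun kp i :=
    if h : i.1 ∈ S then kp.1 ⟨i.1, h⟩ else
      cast (congrArg (fun j => Fin (n j)) ((Finset.mem_insert.mp i.2).resolve_right h).symm) kp.2
  left_inv k := by
    funext i
    rcases i with ⟨iv, hmem⟩
    by_cases h : iv ∈ S
    · simp only [dif_pos h]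
    · have hio : iv = i₀ := by
        rcases Finset.mem_insert.mp hmem with h' | h'
        · exact h'
        · exact absurd h' h
      subst hio
      simp only [dif_neg h]
      rfl
  right_inv kp := by
    ext i
    · simp only [dif_pos i.2]
    · simp only [dif_neg hi₀]
      rfl

end MainInduction

section MainInduction2

variable {m : ℕ} {Ω : Fin m → Type} [∀ i, MeasurableSpace (Ω i)] {μ : ∀ i, Measure (Ω i)}
  {Ω' : Type} [MeasurableSpace Ω'] {ν : Measure Ω'} {q : Fin m → ℝ≥0∞} {p : ℝ≥0∞}
  {T : (∀ i, Ω i → ℝ) → Ω' → ℝ} {M : ℝ}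

lemma insertPiEquiv_symm_apply {n : Fin m → ℕ} {i₀ : Fin m} {S : Finset (Fin m)}
    (hi₀ : i₀ ∉ S) (kp : (∀ i : {j // j ∈ S}, Fin (n i.1)) × Fin (n i₀))
    (i : {j // j ∈ insert i₀ S}) :
    (insertPiEquiv n i₀ S hi₀).symm kp i =
      if h : i.1 ∈ S then kp.1 ⟨i.1, h⟩ else
        cast (congrArg (fun j => Fin (n j))
          ((Finset.mem_insert.mp i.2).resolve_right h).symm) kp.2 := rfl

lemma T_main {r : ℝ≥0∞} (hr : 1 ≤ r) (hT : IsBddMultilinear μ ν q p T M)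
    (hpos : ∀ f : ∀ i, Ω i → ℝ, (∀ j, MemLp (f j) (q j) (μ j)) →
      (∀ j, ∀ᵐ x ∂(μ j), 0 ≤ f j x) → ∀ᵐ ω ∂ν, 0 ≤ T f ω)
    (n : Fin m → ℕ) (F : ∀ i, Fin (n i) → Ω i → ℝ)
    (hF : ∀ i k, MemLp (F i k) (q i) (μ i)) (hFpos : ∀ i k x, 0 ≤ F i k x)
    (g : ∀ i, Ω i → ℝ) (hgdef : ∀ i, g i = fun x => lrNorm r (fun k => F i k x))
    (hg : ∀ i, MemLp (g i) (q i) (μ i)) (S : Finset (Fin m)) :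
    ∀ᵐ ω ∂ν,
      lrNorm r (fun k : (∀ i : {j // j ∈ S}, Fin (n i.1)) =>
        T (fun i => if h : i ∈ S then F i (k ⟨i, h⟩) else g i) ω) ≤ T g ω := by
  classical
  have hgpos : ∀ i x, 0 ≤ g i x := fun i x => by rw [hgdef i]; exact lrNorm_nonneg _
  induction S using Finset.induction_on with
  | empty =>
      haveI : IsEmpty {j // j ∈ (∅ : Finset (Fin m))} := ⟨fun x => Finset.notMem_empty _ x.2⟩
      have harg : ∀ k : (∀ i : {j // j ∈ (∅ : Finset (Fin m))}, Fin (n i.1)),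
          (fun i => if h : i ∈ (∅ : Finset (Fin m)) then F i (k ⟨i, h⟩) else g i) = g := by
        intro k; funext i; rw [dif_neg (by simp)]
      have h0 := hpos g hg fun j => Filter.Eventually.of_forall (hgpos j)
      filter_upwards [h0] with ω hω
      rw [lrNorm_unique hr, harg, abs_of_nonneg hω]
  | @insert i₀ S hi₀ ih =>
      set e := insertPiEquiv n i₀ S hi₀ with hedef
      have hbasememℒp : ∀ (k' : ∀ i : {j // j ∈ S}, Fin (n i.1)) j,
          MemLp ((fun i => if h : i ∈ S then F i (k' ⟨i, h⟩) else g i) j) (q j) (μ j) := by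
        intro k' j; by_cases h : j ∈ S
        · simp only [dif_pos h]; exact hF j _
        · simp only [dif_neg h]; exact hg j
      have hbasepos : ∀ (k' : ∀ i : {j // j ∈ S}, Fin (n i.1)) j, ∀ᵐ x ∂(μ j),
          0 ≤ (fun i => if h : i ∈ S then F i (k' ⟨i, h⟩) else g i) j x := by
        intro k' j
        refine Filter.Eventually.of_forall fun x => ?_
        by_cases h : j ∈ S
        · simp only [dif_pos h]; exact hFpos j _ x
        · simp only [dif_neg h]; exact hgpos j x
      have hslot : ∀ᵐ ω ∂ν, ∀ k' : (∀ i : {j // j ∈ S}, Fin (n i.1)),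
          lrNorm r (fun k₀ : Fin (n i₀) =>
            T (update (fun i => if h : i ∈ S then F i (k' ⟨i, h⟩) else g i) i₀ (F i₀ k₀)) ω)
            ≤ T (fun i => if h : i ∈ S then F i (k' ⟨i, h⟩) else g i) ω := by
        refine ae_all_iff.mpr fun k' => ?_
        have h := T_lr_slot hr hT hpos _ (hbasememℒp k') (hbasepos k') i₀ (F i₀)
          (hF i₀) (fun k => Filter.Eventually.of_forall fun x => hFpos i₀ k x)
        have hupd : update (fun i => if h : i ∈ S then F i (k' ⟨i, h⟩) else g i) i₀
            (fun x => lrNorm r (fun k => F i₀ k x))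
            = fun i => if h : i ∈ S then F i (k' ⟨i, h⟩) else g i := by
          funext j
          rcases eq_or_ne j i₀ with rfl | hji
          · rw [update_self, dif_neg hi₀, hgdef j]
          · rw [update_of_ne hji]
        rw [hupd] at h
        exact h
      have hTpos : ∀ᵐ ω ∂ν, ∀ k' : (∀ i : {j // j ∈ S}, Fin (n i.1)),
          0 ≤ T (fun i => if h : i ∈ S then F i (k' ⟨i, h⟩) else g i) ω :=
        ae_all_iff.mpr fun k' => hpos _ (hbasememℒp k') (hbasepos k')
      have hcompat : ∀ (k' : ∀ i : {j // j ∈ S}, Fin (n i.1)) (k₀ : Fin (n i₀)),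
          (fun i => if h : i ∈ insert i₀ S then F i ((e.symm (k', k₀)) ⟨i, h⟩) else g i)
            = update (fun i => if h : i ∈ S then F i (k' ⟨i, h⟩) else g i) i₀ (F i₀ k₀) := by
        intro k' k₀
        funext j
        rcases eq_or_ne j i₀ with rfl | hji
        · rw [dif_pos (Finset.mem_insert_self j S), update_self]
          congr 1
          rw [hedef, insertPiEquiv_symm_apply, dif_neg hi₀]
          rfl
        · by_cases h : j ∈ S
          · rw [dif_pos (Finset.mem_insert_of_mem h), update_of_ne hji]
            simp only [dif_pos h]
            congr 1
            rw [hedef, insertPiEquiv_symm_apply]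
            simp only
            rw [dif_pos h]
          · rw [dif_neg (by simp [hji, h] : ¬ j ∈ insert i₀ S), update_of_ne hji]
            simp only [dif_neg h]
      filter_upwards [hslot, hTpos, ih] with ω h1 h2 h3
      calc lrNorm r (fun k : (∀ i : {j // j ∈ insert i₀ S}, Fin (n i.1)) =>
              T (fun i => if h : i ∈ insert i₀ S then F i (k ⟨i, h⟩) else g i) ω)
          = lrNorm r ((fun k : (∀ i : {j // j ∈ insert i₀ S}, Fin (n i.1)) =>
              T (fun i => if h : i ∈ insert i₀ S then F i (k ⟨i, h⟩) else g i) ω) ∘ e.symm) :=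
            (lrNorm_comp_equiv e.symm _).symm
        _ = lrNorm r (fun kp : ((∀ i : {j // j ∈ S}, Fin (n i.1)) × Fin (n i₀)) =>
              T (update (fun i => if h : i ∈ S then F i (kp.1 ⟨i, h⟩) else g i) i₀
                (F i₀ kp.2)) ω) := by
            refine lrNorm_congr fun kp => ?_
            rw [Function.comp_apply]
            congr 2
            exact hcompat kp.1 kp.2
        _ = lrNorm r (fun k' : (∀ i : {j // j ∈ S}, Fin (n i.1)) =>
              lrNorm r (fun k₀ : Fin (n i₀) =>
                T (update (fun i => if h : i ∈ S then F i (k' ⟨i, h⟩) else g i) i₀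
                  (F i₀ k₀)) ω)) := lrNorm_prod hr _
        _ ≤ lrNorm r (fun k' : (∀ i : {j // j ∈ S}, Fin (n i.1)) =>
              T (fun i => if h : i ∈ S then F i (k' ⟨i, h⟩) else g i) ω) := by
            refine lrNorm_mono fun k' => ?_
            rw [abs_of_nonneg (lrNorm_nonneg _)]
            exact (h1 k').trans (le_abs_self _)
        _ ≤ T g ω := h3

end MainInduction2

def univPiEquiv {m : ℕ} (n : Fin m → ℕ) :
    (∀ i : {j // j ∈ (Finset.univ : Finset (Fin m))}, Fin (n i.1)) ≃ (∀ i, Fin (n i)) where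
  toFun k i := k ⟨i, Finset.mem_univ i⟩
  invFun k i := k i.1
  left_inv k := rfl
  right_inv k := rfl

/-- A positive bounded multilinear operator (norm at most `M`) satisfies the
Marcinkiewicz–Zygmund inequality with constant `M` (i.e. `C = 1`) for every `1 ≤ r ≤ ∞`,
for all exponents `0 < qᵢ, p ≤ ∞`. -/
theorem statement15 (m : ℕ) (hm : 1 ≤ m) (q : Fin m → ℝ≥0∞) (hq : ∀ i, 0 < q i)
    (p : ℝ≥0∞) (hp : 0 < p) (r : ℝ≥0∞) (hr : 1 ≤ r)
    (Ω : Fin m → Type) [∀ i, MeasurableSpace (Ω i)] (μ : ∀ i, Measure (Ω i))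
    [∀ i, SigmaFinite (μ i)]
    (Ω' : Type) [MeasurableSpace Ω'] (ν : Measure Ω') [SigmaFinite ν]
    (T : (∀ i, Ω i → ℝ) → Ω' → ℝ) (M : ℝ) (hM : 0 ≤ M)
    (hT : IsBddMultilinear μ ν q p T M)
    (hpos : ∀ f : ∀ i, Ω i → ℝ, (∀ j, MemLp (f j) (q j) (μ j)) →
      (∀ j, ∀ᵐ x ∂(μ j), 0 ≤ f j x) → ∀ᵐ ω ∂ν, 0 ≤ T f ω)
    (n : Fin m → ℕ) (f : ∀ i, Fin (n i) → Ω i → ℝ)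
    (hf : ∀ i kᵢ, MemLp (f i kᵢ) (q i) (μ i)) :
    MZineq μ ν q p r T M n f := by
  classical
  have hFm : ∀ i k, MemLp (fun x => |f i k x|) (q i) (μ i) := fun i k =>
    ((hf i k).abs).ae_eq (Filter.Eventually.of_forall fun x => rfl)
  have hgdef : ∀ i, (fun x => lrNorm r fun kᵢ : Fin (n i) => f i kᵢ x)
      = fun x => lrNorm r (fun k : Fin (n i) => |f i k x|) := by
    intro i; funext x
    exact lrNorm_congr fun k => (abs_abs _).symm
  have hg : ∀ i, MemLp (fun x => lrNorm r fun kᵢ : Fin (n i) => f i kᵢ x) (q i) (μ i) :=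
    fun i => memℒp_lrNorm hr _ (hf i)
  have hmain := T_main hr hT hpos n (fun i k x => |f i k x|) hFm
    (fun i k x => abs_nonneg _)
    (fun i => fun x => lrNorm r fun kᵢ : Fin (n i) => f i kᵢ x) hgdef hg Finset.univ
  have habs : ∀ᵐ ω ∂ν, ∀ k : ∀ i, Fin (n i),
      |T (fun i => f i (k i)) ω| ≤ T (fun i => fun x => |f i (k i) x|) ω := by
    refine ae_all_iff.mpr fun k => ?_
    exact T_abs_le hT hpos _ _ (fun j => hf j (k j)) (fun j => hFm j (k j))
      (fun j => Filter.Eventually.of_forall fun x => le_refl _)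
  have hfinal : ∀ᵐ ω ∂ν,
      lrNorm r (fun k : ∀ i, Fin (n i) => T (fun i => f i (k i)) ω)
        ≤ T (fun i => fun x => lrNorm r fun kᵢ : Fin (n i) => f i kᵢ x) ω := by
    filter_upwards [hmain, habs] with ω h1 h2
    calc lrNorm r (fun k : ∀ i, Fin (n i) => T (fun i => f i (k i)) ω)
        ≤ lrNorm r (fun k : ∀ i, Fin (n i) => T (fun i => fun x => |f i (k i) x|) ω) := by
          refine lrNorm_mono fun k => ?_
          exact (h2 k).trans (le_abs_self _)
      _ = lrNorm r ((fun k : ∀ i, Fin (n i) =>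
            T (fun i => fun x => |f i (k i) x|) ω) ∘ univPiEquiv n) :=
          (lrNorm_comp_equiv (univPiEquiv n) _).symm
      _ = lrNorm r (fun ks : (∀ i : {j // j ∈ (Finset.univ : Finset (Fin m))}, Fin (n i.1)) =>
            T (fun i => if h : i ∈ Finset.univ then (fun i k x => |f i k x|) i (ks ⟨i, h⟩) else
              (fun i => fun x => lrNorm r fun kᵢ : Fin (n i) => f i kᵢ x) i) ω) := by
          refine lrNorm_congr fun ks => ?_
          rw [Function.comp_apply]
          congr 2
          funext i
          rw [dif_pos (Finset.mem_univ i)]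
          rfl
      _ ≤ T (fun i => fun x => lrNorm r fun kᵢ : Fin (n i) => f i kᵢ x) ω := h1
  have hLHS : eLpNorm (fun ω => lrNorm r fun k : ∀ i, Fin (n i) =>
        T (fun i => f i (k i)) ω) p ν
      ≤ eLpNorm (T (fun i => fun x => lrNorm r fun kᵢ : Fin (n i) => f i kᵢ x)) p ν := by
    refine eLpNorm_mono_ae ?_
    filter_upwards [hfinal] with ω hω
    rw [Real.norm_eq_abs, Real.norm_eq_abs, abs_of_nonneg (lrNorm_nonneg _)]
    exact hω.trans (le_abs_self _)
  have hbound := hT.bound _ hg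
  exact hLHS.trans hbound
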